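/- Let d be a positive natural number, let H₁ and H₂ be Hermitian d×d complex matrices, let t be a real number, let L be a positive natural number, and set τ = t/L. Then ‖exp(−i·(H₁+H₂)·t) − (exp(−i·H₁·τ) · exp(−i·H₂·τ))^L‖ ≤ (t²/(2L)) · ‖H₁·H₂ − H₂·H₁‖, where exp denotes the matrix exponential and ‖·‖ the operator norm. -/

import Mathlib

set_option maxHeartbeats 1000000
set_option synthInstance.maxHeartbeats 400000
set_option linter.unusedSectionVars false

open NormedSpace Complex

section Aux

variable {𝒜 : Type*} [NormedRing 𝒜] [NormedAlgebra ℂ 𝒜] [CompleteSpace 𝒜]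

lemma cont1 (x : 𝒜) : Continuous fun u : ℝ => exp ((u : ℂ) • x) :=
  by letI : NormedAlgebra ℚ 𝒜 := .restrictScalars ℚ ℂ 𝒜
     exact NormedSpace.exp_continuous.comp (Complex.continuous_ofReal.smul continuous_const)

lemma cont2 (x : 𝒜) (c : ℝ) : Continuous fun u : ℝ => exp (((c - u : ℝ) : ℂ) • x) :=
  (cont1 x).comp (continuous_const.sub continuous_id)

lemma compOfReal {g : ℂ → 𝒜} {g' : 𝒜} {u : ℝ} (hg : HasDerivAt g g' (u : ℂ)) :
    HasDerivAt (fun v : ℝ => g (v : ℂ)) g' u := by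
  simpa [Function.comp_def] using hg.scomp u Complex.ofRealCLM.hasDerivAt

lemma hasDerivAt_exp_real (x : 𝒜) (u : ℝ) :
    HasDerivAt (fun v : ℝ => exp ((v : ℂ) • x)) (exp ((u : ℂ) • x) * x) u :=
  compOfReal (hasDerivAt_exp_smul_const x (u : ℂ))

lemma hasDerivAt_exp_real_rev (x : 𝒜) (c u : ℝ) :
    HasDerivAt (fun v : ℝ => exp (((c - v : ℝ) : ℂ) • x))
      (-(x * exp (((c - u : ℝ) : ℂ) • x))) u := by
  have h3 : HasDerivAt (fun w : ℂ => (c : ℂ) - w) (-1) (u : ℂ) :=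
    (hasDerivAt_id ((u : ℂ))).const_sub (c : ℂ)
  have h1 : HasDerivAt (fun w : ℂ => exp (((c : ℂ) - w) • x))
      (-(x * exp (((c : ℂ) - (u : ℂ)) • x))) (u : ℂ) := by
    have := (hasDerivAt_exp_smul_const' x ((c : ℂ) - (u : ℂ))).scomp (u : ℂ) h3
    simpa [Function.comp_def] using this
  have h2 := compOfReal h1
  simpa [← Complex.ofReal_sub] using h2


lemma comm_est (A B : 𝒜) (hA : ∀ u : ℝ, ‖exp ((u : ℂ) • A)‖ = 1)
    {s : ℝ} (hs : 0 ≤ s) :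
    ‖exp ((s : ℂ) • A) * B - B * exp ((s : ℂ) • A)‖ ≤ s * ‖A * B - B * A‖ := by
  set C := ‖A * B - B * A‖ with hC
  set h : ℝ → 𝒜 := fun u => exp ((u : ℂ) • A) * B * exp (((s - u : ℝ) : ℂ) • A) with hh
  set h' : ℝ → 𝒜 := fun u =>
    exp ((u : ℂ) • A) * (A * B - B * A) * exp (((s - u : ℝ) : ℂ) • A) with hh'
  have hder : ∀ u : ℝ, HasDerivAt h (h' u) u := by
    intro u
    have d2 := ((hasDerivAt_exp_real A u).mul (hasDerivAt_const u B)).mul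
      (hasDerivAt_exp_real_rev A s u)
    convert d2 using 1
    · rfl
    simp only [hh', mul_zero, add_zero, Pi.mul_apply]
    noncomm_ring
  have hcont : Continuous h' := by
    exact ((cont1 A).mul continuous_const).mul (cont2 A s)
  have key := intervalIntegral.integral_eq_sub_of_hasDerivAt
    (f := h) (f' := h') (a := 0) (b := s) (fun u _ => hder u) (hcont.intervalIntegrable 0 s)
  have h0 : h 0 = B * exp ((s : ℂ) • A) := by simp [hh]
  have h1 : h s = exp ((s : ℂ) • A) * B := by simp [hh]
  have hbd : ∀ u ∈ Set.uIoc (0 : ℝ) s, ‖h' u‖ ≤ C := by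
    intro u _
    calc ‖h' u‖ ≤ ‖exp ((u : ℂ) • A) * (A * B - B * A)‖ * ‖exp (((s - u : ℝ) : ℂ) • A)‖ :=
          norm_mul_le _ _
      _ ≤ ‖exp ((u : ℂ) • A)‖ * ‖A * B - B * A‖ * ‖exp (((s - u : ℝ) : ℂ) • A)‖ := by
          gcongr; exact norm_mul_le _ _
      _ = C := by rw [hA u, hA (s - u)]; ring
  calc ‖exp ((s : ℂ) • A) * B - B * exp ((s : ℂ) • A)‖
      = ‖∫ u in (0 : ℝ)..s, h' u‖ := by rw [key, h0, h1]
    _ ≤ C * |s - 0| := intervalIntegral.norm_integral_le_of_norm_le_const hbd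
    _ = s * C := by rw [sub_zero, _root_.abs_of_nonneg hs, mul_comm]


lemma step_est (A B : 𝒜)
    (hA : ∀ u : ℝ, ‖exp ((u : ℂ) • A)‖ = 1)
    (hB : ∀ u : ℝ, ‖exp ((u : ℂ) • B)‖ = 1)
    (hM : ∀ u : ℝ, ‖exp ((u : ℂ) • (A + B))‖ = 1) :
    ‖exp (A + B) - exp A * exp B‖ ≤ ‖A * B - B * A‖ / 2 := by
  set C := ‖A * B - B * A‖ with hC
  have hC0 : (0 : ℝ) ≤ C := norm_nonneg _
  set f : ℝ → 𝒜 := fun u => exp (((1 - u : ℝ) : ℂ) • (A + B)) * exp ((u : ℂ) • A) *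
    exp ((u : ℂ) • B) with hf
  set f' : ℝ → 𝒜 := fun u => exp (((1 - u : ℝ) : ℂ) • (A + B)) *
    (exp ((u : ℂ) • A) * B - B * exp ((u : ℂ) • A)) * exp ((u : ℂ) • B) with hf'
  have hder : ∀ u : ℝ, HasDerivAt f (f' u) u := by
    intro u
    have d2 := ((hasDerivAt_exp_real_rev (A + B) 1 u).mul (hasDerivAt_exp_real A u)).mul
      (hasDerivAt_exp_real B u)
    convert d2 using 1
    · rfl
    have c1 : exp (((1 - u : ℝ) : ℂ) • (A + B)) * (A + B) =
        (A + B) * exp (((1 - u : ℝ) : ℂ) • (A + B)) :=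
      (((Commute.refl (A + B)).smul_left _).exp_left).eq
    have c2 : exp ((u : ℂ) • A) * A = A * exp ((u : ℂ) • A) :=
      (((Commute.refl A).smul_left _).exp_left).eq
    have c3 : exp ((u : ℂ) • B) * B = B * exp ((u : ℂ) • B) :=
      (((Commute.refl B).smul_left _).exp_left).eq
    set g := exp (((1 - u : ℝ) : ℂ) • (A + B))
    set p := exp ((u : ℂ) • A)
    set k := exp ((u : ℂ) • B)
    show g * (p * B - B * p) * k = (-((A + B) * g) * p + g * (p * A)) * k + g * p * (k * B)
    rw [← c1, c2, c3]
    noncomm_ring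
  have hcont : Continuous f' :=
    ((cont2 (A + B) 1).mul (((cont1 A).mul continuous_const).sub
      (continuous_const.mul (cont1 A)))).mul (cont1 B)
  have key := intervalIntegral.integral_eq_sub_of_hasDerivAt
    (f := f) (f' := f') (a := 0) (b := 1) (fun u _ => hder u) (hcont.intervalIntegrable 0 1)
  have h0 : f 0 = exp (A + B) := by
    simp [hf]
  have h1 : f 1 = exp A * exp B := by
    simp [hf]
  have hbd : ∀ᵐ u ∂(MeasureTheory.volume.restrict (Set.uIoc (0:ℝ) 1)),
      ‖f' u‖ ≤ u * C := by
    refine (MeasureTheory.ae_restrict_iff' measurableSet_uIoc).2 (.of_forall fun u hu => ?_)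
    rw [Set.uIoc_of_le zero_le_one] at hu
    have hu0 : (0 : ℝ) ≤ u := le_of_lt hu.1
    calc ‖f' u‖ ≤ ‖exp (((1 - u : ℝ) : ℂ) • (A + B)) *
          (exp ((u : ℂ) • A) * B - B * exp ((u : ℂ) • A))‖ * ‖exp ((u : ℂ) • B)‖ :=
          norm_mul_le _ _
      _ ≤ ‖exp (((1 - u : ℝ) : ℂ) • (A + B))‖ *
          ‖exp ((u : ℂ) • A) * B - B * exp ((u : ℂ) • A)‖ * ‖exp ((u : ℂ) • B)‖ := by
          gcongr; exact norm_mul_le _ _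
      _ = ‖exp ((u : ℂ) • A) * B - B * exp ((u : ℂ) • A)‖ := by
          rw [hM (1 - u), hB u]; ring
      _ ≤ u * C := comm_est A B hA hu0
  have hintg : IntervalIntegrable (fun u : ℝ => u * C) MeasureTheory.volume 0 1 :=
    (continuous_id.mul continuous_const).intervalIntegrable 0 1
  have hval : (∫ u in (0:ℝ)..1, u * C) = C / 2 := by
    rw [intervalIntegral.integral_mul_const, integral_id]
    ring
  calc ‖exp (A + B) - exp A * exp B‖ = ‖f 1 - f 0‖ := by rw [h0, h1, norm_sub_rev]
    _ = ‖∫ u in (0:ℝ)..1, f' u‖ := by rw [key]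
    _ ≤ |∫ u in (0:ℝ)..1, u * C| := intervalIntegral.norm_integral_le_of_norm_le zero_le_one
        (by rw [Set.uIoc_of_le zero_le_one] at hbd; exact (MeasureTheory.ae_restrict_iff' measurableSet_Ioc).1 hbd) hintg |>.trans (le_abs_self _)
    _ = C / 2 := by rw [hval]; exact _root_.abs_of_nonneg (by positivity)


lemma pow_est (u v : 𝒜) (h1 : ‖(1 : 𝒜)‖ ≤ 1) (hu : ‖u‖ ≤ 1) (hv : ‖v‖ ≤ 1) :
    ∀ n : ℕ, ‖u ^ n - v ^ n‖ ≤ n * ‖u - v‖ := by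
  have hun : ∀ n : ℕ, ‖u ^ n‖ ≤ 1 := by
    intro n
    induction n with
    | zero => simpa using h1
    | succ n ih =>
      rw [pow_succ]
      exact le_trans (norm_mul_le _ _) (by nlinarith [norm_nonneg (u ^ n)])
  intro n
  induction n with
  | zero => simp
  | succ n ih =>
    have key : u ^ (n + 1) - v ^ (n + 1) = u ^ n * (u - v) + (u ^ n - v ^ n) * v := by
      noncomm_ring
    rw [key]
    have hd0 : (0:ℝ) ≤ ‖u - v‖ := norm_nonneg _
    calc ‖u ^ n * (u - v) + (u ^ n - v ^ n) * v‖
        ≤ ‖u ^ n * (u - v)‖ + ‖(u ^ n - v ^ n) * v‖ := norm_add_le _ _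
      _ ≤ ‖u ^ n‖ * ‖u - v‖ + ‖u ^ n - v ^ n‖ * ‖v‖ :=
          add_le_add (norm_mul_le _ _) (norm_mul_le _ _)
      _ ≤ 1 * ‖u - v‖ + (n * ‖u - v‖) * 1 := by
          have := hun n
          have h2 := norm_nonneg (u ^ n - v ^ n)
          nlinarith
      _ = (n + 1 : ℕ) * ‖u - v‖ := by push_cast; ring

end Aux

section CStar

variable {𝒜 : Type*} [NormedRing 𝒜] [NormedAlgebra ℂ 𝒜] [StarRing 𝒜] [CStarRing 𝒜]
  [CompleteSpace 𝒜] [StarModule ℂ 𝒜] [ContinuousStar 𝒜] [Nontrivial 𝒜]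

lemma norm_exp_skew {a : 𝒜} (ha : IsSelfAdjoint a) {c : ℂ} (hc : star c = -c) :
    ‖exp (c • a)‖ = 1 := by
  have hmem : c • a ∈ skewAdjoint 𝒜 := by
    rw [skewAdjoint.mem_iff, star_smul, ha.star_eq, hc, neg_smul]
  letI : NormedAlgebra ℚ 𝒜 := .restrictScalars ℚ ℂ 𝒜
  exact CStarRing.norm_of_mem_unitary (exp_mem_unitary_of_mem_skewAdjoint hmem)

end CStar


/-- The operator norm (largest singular value) of a complex square matrix, i.e. the norm of
the induced continuous linear endomorphism of Euclidean space. -/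
noncomputable def matOpNorm {d : ℕ} (A : Matrix (Fin d) (Fin d) ℂ) : ℝ :=
  ‖Matrix.toEuclideanCLM (𝕜 := ℂ) A‖

theorem first_order_trotter_error
    (d : ℕ) (hd : 0 < d)
    (H₁ H₂ : Matrix (Fin d) (Fin d) ℂ)
    (h₁ : H₁.IsHermitian) (h₂ : H₂.IsHermitian)
    (t : ℝ) (L : ℕ) (hL : 0 < L) (τ : ℝ) (hτ : τ = t / L) :
    matOpNorm
        (NormedSpace.exp ((-(Complex.I * (t : ℂ))) • (H₁ + H₂)) -
          (NormedSpace.exp ((-(Complex.I * (τ : ℂ))) • H₁) *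
            NormedSpace.exp ((-(Complex.I * (τ : ℂ))) • H₂)) ^ L) ≤
      t ^ 2 / (2 * L) * matOpNorm (H₁ * H₂ - H₂ * H₁) := by
  haveI : Nonempty (Fin d) := Fin.pos_iff_nonempty.mp hd
  haveI hnt : Nontrivial (EuclideanSpace ℂ (Fin d) →L[ℂ] EuclideanSpace ℂ (Fin d)) := by
    obtain ⟨x, hx⟩ := exists_ne (0 : EuclideanSpace ℂ (Fin d))
    refine ⟨1, 0, fun h => hx ?_⟩
    simpa using DFunLike.congr_fun h x
  set φ := Matrix.toEuclideanCLM (𝕜 := ℂ) (n := Fin d) with hφ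
  have hφc : Continuous φ := by
    let ψ : Matrix (Fin d) (Fin d) ℂ →ₗ[ℂ]
        (EuclideanSpace ℂ (Fin d) →L[ℂ] EuclideanSpace ℂ (Fin d)) :=
      { toFun := φ, map_add' := map_add φ, map_smul' := map_smul φ }
    exact ψ.continuous_of_finiteDimensional
  have hmap : ∀ X : Matrix (Fin d) (Fin d) ℂ, φ (exp X) = exp (φ X) := by
    letI : NormedRing (Matrix (Fin d) (Fin d) ℂ) := Matrix.linftyOpNormedRing
    letI : NormedAlgebra ℂ (Matrix (Fin d) (Fin d) ℂ) := Matrix.linftyOpNormedAlgebra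
    letI : NormedAlgebra ℚ (Matrix (Fin d) (Fin d) ℂ) := .restrictScalars ℚ ℂ _
    letI : NormedAlgebra ℚ (EuclideanSpace ℂ (Fin d) →L[ℂ] EuclideanSpace ℂ (Fin d)) :=
      .restrictScalars ℚ ℂ _
    exact fun X => map_exp φ hφc X
  set a := φ H₁ with hab1
  set b := φ H₂ with hab2
  have ha : IsSelfAdjoint a := by
    have hs : star H₁ = H₁ := by rw [Matrix.star_eq_conjTranspose, h₁.eq]
    rw [hab1, IsSelfAdjoint, ← map_star φ, hs]
  have hb : IsSelfAdjoint b := by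
    have hs : star H₂ = H₂ := by rw [Matrix.star_eq_conjTranspose, h₂.eq]
    rw [hab2, IsSelfAdjoint, ← map_star φ, hs]
  -- rewrite the goal through φ
  have goal_eq : matOpNorm
        (NormedSpace.exp ((-(Complex.I * (t : ℂ))) • (H₁ + H₂)) -
          (NormedSpace.exp ((-(Complex.I * (τ : ℂ))) • H₁) *
            NormedSpace.exp ((-(Complex.I * (τ : ℂ))) • H₂)) ^ L) =
      ‖exp ((-(Complex.I * (t : ℂ))) • (a + b)) -
        (exp ((-(Complex.I * (τ : ℂ))) • a) * exp ((-(Complex.I * (τ : ℂ))) • b)) ^ L‖ := by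
    rw [matOpNorm, ← hφ, map_sub, map_pow, map_mul, hmap, hmap, hmap, map_smul, map_smul,
      map_smul, map_add]
  have goal_eq2 : matOpNorm (H₁ * H₂ - H₂ * H₁) = ‖a * b - b * a‖ := by
    rw [matOpNorm, ← hφ, map_sub, map_mul, map_mul]
  rw [goal_eq, goal_eq2]
  have hsc : ∀ u r : ℝ, star ((u : ℂ) * -(Complex.I * (r : ℂ))) =
      -((u : ℂ) * -(Complex.I * (r : ℂ))) := by
    intro u r
    simp only [Complex.star_def, map_mul, map_neg, Complex.conj_ofReal, Complex.conj_I]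
    ring
  set A := (-(Complex.I * (τ : ℂ))) • a with hA'
  set B := (-(Complex.I * (τ : ℂ))) • b with hB'
  haveI : ContinuousStar (EuclideanSpace ℂ (Fin d) →L[ℂ] EuclideanSpace ℂ (Fin d)) :=
    ⟨ContinuousLinearMap.adjoint.continuous⟩
  have hA : ∀ u : ℝ, ‖exp ((u : ℂ) • A)‖ = 1 := fun u => by
    rw [hA', smul_smul]; exact norm_exp_skew (𝒜 := EuclideanSpace ℂ (Fin d) →L[ℂ] EuclideanSpace ℂ (Fin d)) ha (hsc u τ)
  have hB : ∀ u : ℝ, ‖exp ((u : ℂ) • B)‖ = 1 := fun u => by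
    rw [hB', smul_smul]; exact norm_exp_skew (𝒜 := EuclideanSpace ℂ (Fin d) →L[ℂ] EuclideanSpace ℂ (Fin d)) hb (hsc u τ)
  have hABe : A + B = (-(Complex.I * (τ : ℂ))) • (a + b) := by
    rw [hA', hB', smul_add]
  have hM : ∀ u : ℝ, ‖exp ((u : ℂ) • (A + B))‖ = 1 := fun u => by
    rw [hABe, smul_smul]; exact norm_exp_skew (ha.add hb) (hsc u τ)
  have hL0 : (L : ℝ) ≠ 0 := Nat.cast_ne_zero.mpr hL.ne'
  have hfull : (-(Complex.I * (t : ℂ))) • (a + b) = L • (A + B) := by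
    rw [hABe, ← Nat.cast_smul_eq_nsmul ℂ, smul_smul]
    congr 1
    have hL0c : (L : ℂ) ≠ 0 := Nat.cast_ne_zero.mpr hL.ne'
    have htc : (t : ℂ) = (L : ℂ) * (τ : ℂ) := by
      rw [hτ]; push_cast; field_simp
    rw [htc]; ring
  letI : NormedAlgebra ℚ (EuclideanSpace ℂ (Fin d) →L[ℂ] EuclideanSpace ℂ (Fin d)) :=
    .restrictScalars ℚ ℂ _
  rw [hfull, NormedSpace.exp_nsmul]
  have hstep := step_est A B hA hB hM
  have hu1 : ‖exp (A + B)‖ ≤ 1 := le_of_eq (by simpa using hM 1)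
  have hea : ‖exp A‖ = 1 := by simpa using hA 1
  have heb : ‖exp B‖ = 1 := by simpa using hB 1
  have hv1 : ‖exp A * exp B‖ ≤ 1 := by
    refine le_trans (norm_mul_le _ _) ?_
    rw [hea, heb]; norm_num
  have hone : ‖(1 : EuclideanSpace ℂ (Fin d) →L[ℂ] EuclideanSpace ℂ (Fin d))‖ ≤ 1 :=
    le_of_eq CStarRing.norm_one
  have htel := pow_est _ _ hone hu1 hv1 L
  have hsc2 : (-(Complex.I * (τ : ℂ))) * (-(Complex.I * (τ : ℂ))) = -(τ : ℂ) ^ 2 := by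
    rw [neg_mul_neg, show Complex.I * (τ : ℂ) * (Complex.I * (τ : ℂ)) =
      Complex.I ^ 2 * (τ : ℂ) ^ 2 from by ring, Complex.I_sq]
    ring
  have hcomm : A * B - B * A = (-(τ : ℂ) ^ 2) • (a * b - b * a) := by
    rw [hA', hB', smul_mul_smul_comm, smul_mul_smul_comm, hsc2]
    exact (smul_sub _ _ _).symm
  have hns : ‖(-(τ : ℂ) ^ 2)‖ = τ ^ 2 := by
    rw [norm_neg, norm_pow, Complex.norm_real, Real.norm_eq_abs, _root_.sq_abs]
  have hcn : ‖A * B - B * A‖ = τ ^ 2 * ‖a * b - b * a‖ := by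
    rw [hcomm]
    rw [norm_smul (α := ℂ) (-(τ : ℂ) ^ 2) (a * b - b * a), hns]
  calc ‖exp (A + B) ^ L - (exp A * exp B) ^ L‖
      ≤ L * ‖exp (A + B) - exp A * exp B‖ := htel
    _ ≤ L * (‖A * B - B * A‖ / 2) := by
        exact mul_le_mul_of_nonneg_left hstep (Nat.cast_nonneg L)
    _ = t ^ 2 / (2 * L) * ‖a * b - b * a‖ := by
        rw [hcn, hτ]; field_simp
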